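/- For every integer k ≥ 2, the end vertex of the path transmits at least as often as its neighbour: for every permutation σ of {1,…,k} exactly one of the vertices 1 and 2 belongs to S(σ), and the number of permutations σ with 1 ∈ S(σ) is greater than or equal to the number of permutations σ with 2 ∈ S(σ). -/

import Mathlib

def pathGreedy (k : ℕ) (σ : Equiv.Perm (Fin k)) : Finset (Fin k) :=
  (List.finRange k).foldl
    (fun D r =>
      if ∀ j ∈ D, ¬ ((σ.symm r : ℕ) + 1 = (j : ℕ) ∨ (j : ℕ) + 1 = (σ.symm r : ℕ))
      then insert (σ.symm r) D else D)
    ∅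

def gstep (k : ℕ) (σ : Equiv.Perm (Fin k)) (D : Finset (Fin k)) (r : Fin k) : Finset (Fin k) :=
  if ∀ j ∈ D, ¬ ((σ.symm r : ℕ) + 1 = (j : ℕ) ∨ (j : ℕ) + 1 = (σ.symm r : ℕ))
  then insert (σ.symm r) D else D

def gUp (k : ℕ) (σ : Equiv.Perm (Fin k)) (t : ℕ) : Finset (Fin k) :=
  ((List.finRange k).take t).foldl (gstep k σ) ∅

lemma pathGreedy_eq (k : ℕ) (σ : Equiv.Perm (Fin k)) : pathGreedy k σ = gUp k σ k := by
  unfold pathGreedy gUp gstep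
  rw [List.take_of_length_le (by simp)]

lemma gUp_succ (k : ℕ) (σ : Equiv.Perm (Fin k)) (t : ℕ) (ht : t < k) :
    gUp k σ (t + 1) = gstep k σ (gUp k σ t) ⟨t, ht⟩ := by
  unfold gUp
  rw [List.take_succ, List.foldl_append]
  have h : (List.finRange k)[t]? = some ⟨t, ht⟩ := by
    rw [List.getElem?_eq_getElem (by simpa using ht)]
    simp
  rw [h]
  simp

lemma gUp_stable (k : ℕ) (σ : Equiv.Perm (Fin k)) (t : ℕ) (ht : k ≤ t) :
    gUp k σ (t + 1) = gUp k σ t := by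
  unfold gUp
  rw [List.take_of_length_le (by simpa using Nat.le_succ_of_le ht), List.take_of_length_le (by simpa using ht)]

lemma gUp_subset_succ (k : ℕ) (σ : Equiv.Perm (Fin k)) (t : ℕ) :
    gUp k σ t ⊆ gUp k σ (t + 1) := by
  rcases lt_or_ge t k with ht | ht
  · rw [gUp_succ k σ t ht]
    unfold gstep
    split
    · exact Finset.subset_insert _ _
    · exact subset_rfl
  · rw [gUp_stable k σ t ht]

lemma gUp_mono (k : ℕ) (σ : Equiv.Perm (Fin k)) {t t' : ℕ} (h : t ≤ t') :
    gUp k σ t ⊆ gUp k σ t' := by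
  induction t' with
  | zero => simpa [Nat.le_zero.mp h]
  | succ n ih =>
    rcases Nat.lt_or_ge t (n+1) with h' | h'
    · exact (ih (Nat.lt_succ_iff.mp h')).trans (gUp_subset_succ k σ n)
    · have : t = n + 1 := le_antisymm h h'
      simp [this]

lemma gUp_rank_lt (k : ℕ) (σ : Equiv.Perm (Fin k)) (t : ℕ) {v : Fin k}
    (hv : v ∈ gUp k σ t) : (σ v : ℕ) < t := by
  induction t with
  | zero => simp [gUp] at hv
  | succ n ih =>
    rcases lt_or_ge n k with hn | hn
    · rw [gUp_succ k σ n hn] at hv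
      unfold gstep at hv
      split at hv
      · rcases Finset.mem_insert.mp hv with h | h
        · subst h
          simp [Equiv.apply_symm_apply]
        · exact (ih h).trans (Nat.lt_succ_self n)
      · exact (ih hv).trans (Nat.lt_succ_self n)
    · rw [gUp_stable k σ n hn] at hv
      exact (ih hv).trans (Nat.lt_succ_self n)

lemma mem_pathGreedy_iff_mem_succ (k : ℕ) (σ : Equiv.Perm (Fin k)) (v : Fin k) :
    v ∈ pathGreedy k σ ↔ v ∈ gUp k σ ((σ v : ℕ) + 1) := by
  constructor
  · rw [pathGreedy_eq]
    intro hv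
    by_contra hnot
    have key : ∀ m, v ∉ gUp k σ ((σ v : ℕ) + 1 + m) := by
      intro m
      induction m with
      | zero => simpa using hnot
      | succ n ih =>
        intro hmem
        rcases lt_or_ge ((σ v : ℕ) + 1 + n) k with hn | hn
        · rw [show (σ v : ℕ) + 1 + (n+1) = ((σ v : ℕ) + 1 + n) + 1 by ring,
            gUp_succ k σ _ hn] at hmem
          unfold gstep at hmem
          split at hmem
          · rcases Finset.mem_insert.mp hmem with h | h
            · apply_fun σ at h
              rw [Equiv.apply_symm_apply] at h
              have := congrArg Fin.val h
              simp only [] at this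
              omega
            · exact ih h
          · exact ih hmem
        · rw [show (σ v : ℕ) + 1 + (n+1) = ((σ v : ℕ) + 1 + n) + 1 by ring,
            gUp_stable k σ _ hn] at hmem
          exact ih hmem
    have hlt : (σ v : ℕ) < k := (σ v).isLt
    have := key (k - ((σ v : ℕ) + 1))
    rw [show (σ v : ℕ) + 1 + (k - ((σ v : ℕ) + 1)) = k by omega] at this
    exact this hv
  · intro hv
    rw [pathGreedy_eq]
    exact gUp_mono k σ (σ v).isLt hv

lemma mem_pathGreedy_iff_cond (k : ℕ) (σ : Equiv.Perm (Fin k)) (v : Fin k) :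
    v ∈ pathGreedy k σ ↔
      ∀ j ∈ gUp k σ (σ v : ℕ), ¬ ((v : ℕ) + 1 = (j : ℕ) ∨ (j : ℕ) + 1 = (v : ℕ)) := by
  rw [mem_pathGreedy_iff_mem_succ, gUp_succ k σ (σ v : ℕ) (σ v).isLt]
  have hv : σ.symm ⟨(σ v : ℕ), (σ v).isLt⟩ = v := by
    rw [Fin.eta]; exact Equiv.symm_apply_apply σ v
  unfold gstep
  rw [hv]
  split_ifs with hcond
  · simp only [Finset.mem_insert]
    constructor
    · intro _; exact hcond
    · intro _; exact Or.inl trivial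
  · constructor
    · intro hmem
      exact absurd (gUp_rank_lt k σ _ hmem) (lt_irrefl _)
    · intro h; exact absurd h hcond

lemma gUp_congr (k : ℕ) (σ τ : Equiv.Perm (Fin k)) (t : ℕ)
    (h : ∀ s (hs : s < k), s < t → σ.symm ⟨s, hs⟩ = τ.symm ⟨s, hs⟩) :
    gUp k σ t = gUp k τ t := by
  induction t with
  | zero => rfl
  | succ n ih =>
    have ih' := ih (fun s hs hst => h s hs (hst.trans (Nat.lt_succ_self n)))
    rcases lt_or_ge n k with hn | hn
    · rw [gUp_succ k σ n hn, gUp_succ k τ n hn, ih']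
      unfold gstep
      rw [h n hn (Nat.lt_succ_self n)]
    · rw [gUp_stable k σ n hn, gUp_stable k τ n hn, ih']

lemma pathGreedy_xor (k : ℕ) (hk : 2 ≤ k) (σ : Equiv.Perm (Fin k)) :
    Xor' ((⟨0, Nat.zero_lt_of_lt hk⟩ : Fin k) ∈ pathGreedy k σ)
         ((⟨1, hk⟩ : Fin k) ∈ pathGreedy k σ) := by
  have h0k : 0 < k := by omega
  set v0 : Fin k := ⟨0, h0k⟩ with hv0
  set v1 : Fin k := ⟨1, hk⟩ with hv1
  have hnotboth : ¬ (v0 ∈ pathGreedy k σ ∧ v1 ∈ pathGreedy k σ) := by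
    rintro ⟨h0, h1⟩
    have hne : (σ v0 : ℕ) ≠ (σ v1 : ℕ) := by
      intro h
      have h2 := σ.injective (Fin.ext h)
      rw [hv0, hv1] at h2
      exact absurd (congrArg Fin.val h2) (by simp)
    rcases Nat.lt_or_ge (σ v0 : ℕ) (σ v1 : ℕ) with hlt | hge
    · have hmem : v0 ∈ gUp k σ (σ v1 : ℕ) :=
        gUp_mono k σ (by omega) ((mem_pathGreedy_iff_mem_succ k σ v0).mp h0)
      have := (mem_pathGreedy_iff_cond k σ v1).mp h1 v0 hmem
      simp [hv0, hv1] at this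
    · have hlt : (σ v1 : ℕ) < (σ v0 : ℕ) := by omega
      have hmem : v1 ∈ gUp k σ (σ v0 : ℕ) :=
        gUp_mono k σ (by omega) ((mem_pathGreedy_iff_mem_succ k σ v1).mp h1)
      have := (mem_pathGreedy_iff_cond k σ v0).mp h0 v1 hmem
      simp [hv0, hv1] at this
  by_cases h1 : v1 ∈ pathGreedy k σ
  · exact Or.inr ⟨h1, fun h0 => hnotboth ⟨h0, h1⟩⟩
  · refine Or.inl ⟨?_, h1⟩
    rw [mem_pathGreedy_iff_cond]
    intro j hj hadj
    have hjval : (v0 : ℕ) + 1 = (j : ℕ) := by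
      rcases hadj with h | h
      · exact h
      · exact absurd h (by simp [hv0])
    have hje : j = v1 := by
      have e0 : (v0 : ℕ) = 0 := rfl
      have e1 : (v1 : ℕ) = 1 := rfl
      exact Fin.ext (by omega)
    subst hje
    apply h1
    rw [pathGreedy_eq]
    exact gUp_mono k σ (le_of_lt (σ v0).isLt) hj

lemma one_mem_imp (k : ℕ) (hk : 2 ≤ k) (σ : Equiv.Perm (Fin k))
    (h : (⟨1, hk⟩ : Fin k) ∈ pathGreedy k σ) :
    (⟨0, Nat.zero_lt_of_lt hk⟩ : Fin k) ∈
      pathGreedy k (Equiv.swap (σ ⟨0, Nat.zero_lt_of_lt hk⟩) (σ ⟨1, hk⟩) * σ) := by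
  have h0k : 0 < k := by omega
  set v0 : Fin k := ⟨0, h0k⟩ with hv0
  set v1 : Fin k := ⟨1, hk⟩ with hv1
  set τ : Equiv.Perm (Fin k) := Equiv.swap (σ v0) (σ v1) * σ with hτ
  have hne01 : σ v0 ≠ σ v1 := by
    intro h2
    have h3 := σ.injective h2
    rw [hv0, hv1] at h3
    exact absurd (congrArg Fin.val h3) (by simp)
  have hτ0 : τ v0 = σ v1 := by
    rw [hτ]
    simp [Equiv.Perm.mul_apply, Equiv.swap_apply_left]
  have hlt : (σ v1 : ℕ) < (σ v0 : ℕ) := by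
    by_contra hge
    push_neg at hge
    have h0 : v0 ∈ pathGreedy k σ := by
      rw [mem_pathGreedy_iff_cond]
      intro j hj hadj
      have hjval : (v0 : ℕ) + 1 = (j : ℕ) := by
        rcases hadj with h' | h'
        · exact h'
        · exact absurd h' (by simp [hv0])
      have hje : j = v1 := by
        have e0 : (v0 : ℕ) = 0 := rfl
        have e1 : (v1 : ℕ) = 1 := rfl
        exact Fin.ext (by omega)
      subst hje
      have hr := gUp_rank_lt k σ _ hj
      have : (σ v0 : ℕ) ≠ (σ v1 : ℕ) := fun h' => hne01 (Fin.ext h')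
      omega
    rcases pathGreedy_xor k hk σ with ⟨_, hn1⟩ | ⟨_, hn0⟩
    · exact hn1 h
    · exact hn0 h0
  have hsym : ∀ s (hs : s < k), s < (σ v1 : ℕ) →
      σ.symm ⟨s, hs⟩ = τ.symm ⟨s, hs⟩ := by
    intro s hs hst
    rw [Equiv.eq_symm_apply, hτ]
    have es : ((⟨s, hs⟩ : Fin k) : ℕ) = s := rfl
    have h1 : (⟨s, hs⟩ : Fin k) ≠ σ v0 := fun h' => by
      have := congrArg Fin.val h'; omega
    have h2 : (⟨s, hs⟩ : Fin k) ≠ σ v1 := fun h' => by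
      have := congrArg Fin.val h'; omega
    calc (Equiv.swap (σ v0) (σ v1) * σ) (σ.symm ⟨s, hs⟩)
        = Equiv.swap (σ v0) (σ v1) ⟨s, hs⟩ := by
          rw [Equiv.Perm.mul_apply, Equiv.apply_symm_apply]
      _ = ⟨s, hs⟩ := Equiv.swap_apply_of_ne_of_ne h1 h2
  have hgU : gUp k σ (σ v1 : ℕ) = gUp k τ (σ v1 : ℕ) :=
    gUp_congr k σ τ _ hsym
  rw [mem_pathGreedy_iff_cond]
  have hτ0v : (τ v0 : ℕ) = (σ v1 : ℕ) := congrArg Fin.val hτ0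
  rw [hτ0v, ← hgU]
  intro j hj hadj
  have hjval : (v0 : ℕ) + 1 = (j : ℕ) := by
    rcases hadj with h' | h'
    · exact h'
    · exact absurd h' (by simp [hv0])
  have hje : j = v1 := by
    have e0 : (v0 : ℕ) = 0 := rfl
    have e1 : (v1 : ℕ) = 1 := rfl
    exact Fin.ext (by omega)
  subst hje
  exact absurd (gUp_rank_lt k σ _ hj) (lt_irrefl _)

lemma invol_aux {α} [DecidableEq α] (σ : Equiv.Perm α) (a b : α) :
    Equiv.swap ((Equiv.swap (σ a) (σ b) * σ) a) ((Equiv.swap (σ a) (σ b) * σ) b) *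
      (Equiv.swap (σ a) (σ b) * σ) = σ := by
  have ha : (Equiv.swap (σ a) (σ b) * σ) a = σ b := by
    simp [Equiv.Perm.mul_apply]
  have hb : (Equiv.swap (σ a) (σ b) * σ) b = σ a := by
    simp [Equiv.Perm.mul_apply]
  rw [ha, hb, Equiv.swap_comm, ← mul_assoc, Equiv.swap_mul_self, one_mul]

theorem end_vertex_beats_neighbour (k : ℕ) (hk : 2 ≤ k) :
    (∀ σ : Equiv.Perm (Fin k),
        Xor' ((⟨0, by omega⟩ : Fin k) ∈ pathGreedy k σ)
             ((⟨1, hk⟩ : Fin k) ∈ pathGreedy k σ)) ∧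
    (Finset.univ.filter
        (fun σ : Equiv.Perm (Fin k) => (⟨1, hk⟩ : Fin k) ∈ pathGreedy k σ)).card ≤
      (Finset.univ.filter
        (fun σ : Equiv.Perm (Fin k) => (⟨0, by omega⟩ : Fin k) ∈ pathGreedy k σ)).card := by
  refine ⟨pathGreedy_xor k hk, ?_⟩
  apply Finset.card_le_card_of_injOn
    (fun σ : Equiv.Perm (Fin k) =>
      Equiv.swap (σ ⟨0, by omega⟩) (σ ⟨1, hk⟩) * σ)
  · intro σ hσ
    rw [Finset.mem_coe, Finset.mem_filter] at hσ ⊢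
    exact ⟨Finset.mem_univ _, one_mem_imp k hk σ hσ.2⟩
  · intro a _ b _ hab
    simp only [] at hab
    have h2 := congrArg
      (fun σ : Equiv.Perm (Fin k) =>
        Equiv.swap (σ ⟨0, by omega⟩) (σ ⟨1, hk⟩) * σ) hab
    simp only [] at h2
    rwa [invol_aux, invol_aux] at h2
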